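/- Let G be an Eulerian orientation of K_{m,n} (m, n even). For an arc e = (x,y) of G, let d(e) be the number of arcs of G going from the out-neighborhood N⁺(y) of y to the in-neighborhood N⁻(x) of x, let α(e) = min{d(e)/(mn), 1/4 − d(e)/(mn)}, and let α(G) = min over all arcs e of α(e). Then G contains at least m²n²·(1/16 − α(G) + 4·α(G)²) copies of the directed 4-cycle. -/

import Mathlib

open Finset

/-- An orientation of `K_{m,n}`: `o a b = true` means the edge between left vertex `a` and
right vertex `b` is directed from `a` to `b`; it is Eulerian if every vertex has equal
indegree and outdegree. -/
def IsEulerianBip {m n : ℕ} (o : Fin m → Fin n → Bool) : Prop :=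
  (∀ a : Fin m, 2 * (univ.filter fun b : Fin n => o a b = true).card = n) ∧
  (∀ b : Fin n, 2 * (univ.filter fun a : Fin m => o a b = true).card = m)

/-- The four arcs spanned by the distinct left vertices `a₁, a₂` and the distinct right
vertices `b₁, b₂` form the directed 4-cycle `a₁ → b₁ → a₂ → b₂ → a₁` or its reverse. -/
def SpansC4 {m n : ℕ} (o : Fin m → Fin n → Bool) (a₁ a₂ : Fin m) (b₁ b₂ : Fin n) : Prop :=
  (o a₁ b₁ = true ∧ o a₂ b₁ = false ∧ o a₂ b₂ = true ∧ o a₁ b₂ = false) ∨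
  (o a₁ b₁ = false ∧ o a₂ b₁ = true ∧ o a₂ b₂ = false ∧ o a₁ b₂ = true)

instance {m n : ℕ} (o : Fin m → Fin n → Bool) (a₁ a₂ : Fin m) (b₁ b₂ : Fin n) :
    Decidable (SpansC4 o a₁ a₂ b₁ b₂) := by
  unfold SpansC4; infer_instance

/-- The number of copies of the directed 4-cycle in `o`, counted as subgraphs: each copy is
recorded once by taking `a₁ < a₂` and `b₁ < b₂`. -/
def numC4 {m n : ℕ} (o : Fin m → Fin n → Bool) : ℕ :=
  ((univ : Finset (Fin m × Fin m × Fin n × Fin n)).filter fun q =>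
    q.1 < q.2.1 ∧ q.2.2.1 < q.2.2.2 ∧ SpansC4 o q.1 q.2.1 q.2.2.1 q.2.2.2).card

/-- For the arc `e` of `o` lying on the edge between `a` and `b` (directed according to `o`),
with `e = (x,y)`, `dArc o a b` is the number of arcs of `o` going from the out-neighborhood
`N⁺(y)` to the in-neighborhood `N⁻(x)`.  If `o a b = true` then `x = a`, `y = b`,
`N⁺(b) = {a' | o a' b = false}` and `N⁻(a) = {b' | o a b' = false}`, and an arc from `N⁺(b)`
to `N⁻(a)` is a pair `(a', b')` there with `o a' b' = true`; the other case is symmetric. -/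
def dArc {m n : ℕ} (o : Fin m → Fin n → Bool) (a : Fin m) (b : Fin n) : ℕ :=
  if o a b = true then
    ((univ : Finset (Fin m × Fin n)).filter fun p =>
      o p.1 b = false ∧ o a p.2 = false ∧ o p.1 p.2 = true).card
  else
    ((univ : Finset (Fin m × Fin n)).filter fun p =>
      o p.1 b = true ∧ o a p.2 = true ∧ o p.1 p.2 = false).card

/-- `α(e) = min{d(e)/(mn), 1/4 − d(e)/(mn)}` for the arc `e` on the edge between `a` and `b`. -/
noncomputable def alphaArc {m n : ℕ} (o : Fin m → Fin n → Bool) (a : Fin m) (b : Fin n) : ℝ :=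
  min ((dArc o a b : ℝ) / (m * n)) (1 / 4 - (dArc o a b : ℝ) / (m * n))

namespace C4Aux

variable {m n : ℕ} (o : Fin m → Fin n → Bool)

/-- number of `b` with `a₁ → b → a₂`. -/
def sCnt (a₁ a₂ : Fin m) : ℕ :=
  (univ.filter fun b : Fin n => o a₁ b = true ∧ o a₂ b = false).card

/-- number of `b'` with `a' → b' → a`. -/
def xCnt (a a' : Fin m) : ℕ :=
  (univ.filter fun b' : Fin n => o a b' = false ∧ o a' b' = true).card

lemma pair_lower (a₁ a₂ : Fin m) (h : a₁ < a₂) :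
    sCnt o a₁ a₂ * sCnt o a₂ a₁ ≤
      ((univ : Finset (Fin n × Fin n)).filter fun q =>
        q.1 < q.2 ∧ SpansC4 o a₁ a₂ q.1 q.2).card := by
  classical
  set S : Finset (Fin n) := univ.filter fun b => o a₁ b = true ∧ o a₂ b = false with hS
  set T : Finset (Fin n) := univ.filter fun b => o a₂ b = true ∧ o a₁ b = false with hT
  have hcard : sCnt o a₁ a₂ * sCnt o a₂ a₁ = (S ×ˢ T).card := by
    rw [Finset.card_product]; rfl
  rw [hcard]
  apply Finset.card_le_card_of_injOn (fun p => if p.1 < p.2 then (p.1, p.2) else (p.2, p.1))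
  · rintro ⟨u, v⟩ huv
    rw [Finset.mem_coe, Finset.mem_product] at huv
    obtain ⟨hu, hv⟩ := huv
    rw [hS, Finset.mem_filter] at hu
    rw [hT, Finset.mem_filter] at hv
    have hne : u ≠ v := by
      intro h; rw [h] at hu; rw [hu.2.1] at hv; exact absurd hv.2.2 (by simp)
    rcases lt_or_gt_of_ne hne with hlt | hgt
    · simp only [if_pos hlt, Finset.mem_coe, Finset.mem_filter, Finset.mem_univ, true_and]
      exact ⟨hlt, Or.inl ⟨hu.2.1, hu.2.2, hv.2.1, hv.2.2⟩⟩
    · have : ¬ u < v := not_lt_of_gt hgt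
      simp only [if_neg this, Finset.mem_coe, Finset.mem_filter, Finset.mem_univ, true_and]
      exact ⟨hgt, Or.inr ⟨hv.2.2, hv.2.1, hu.2.2, hu.2.1⟩⟩
  · rintro ⟨u, v⟩ huv ⟨u', v'⟩ huv' heq
    rw [Finset.mem_coe, Finset.mem_product, hS, hT, Finset.mem_filter, Finset.mem_filter] at huv huv'
    have hne : u ≠ v := by
      intro h; rw [h] at huv; rw [huv.1.2.1] at huv; exact absurd huv.2.2.2 (by simp)
    have hne' : u' ≠ v' := by
      intro h; rw [h] at huv'; rw [huv'.1.2.1] at huv'; exact absurd huv'.2.2.2 (by simp)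
    dsimp only at heq
    split_ifs at heq with h1 h2 h2
    · exact heq
    · -- (u,v) = (v',u') : u = v', contradiction from orientations
      have h3 : u = v' := (Prod.mk.injEq _ _ _ _).mp heq |>.1
      have h4 : v = u' := (Prod.mk.injEq _ _ _ _).mp heq |>.2
      rw [h3] at huv
      rw [huv.1.2.1] at huv'
      exact absurd huv'.2.2.2 (by simp)
    · have h3 : v = u' := (Prod.mk.injEq _ _ _ _).mp heq |>.1
      have h4 : u = v' := (Prod.mk.injEq _ _ _ _).mp heq |>.2
      rw [h4] at huv
      rw [huv.1.2.1] at huv'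
      exact absurd huv'.2.2.2 (by simp)
    · have h3 : v = v' := (Prod.mk.injEq _ _ _ _).mp heq |>.1
      have h4 : u = u' := (Prod.mk.injEq _ _ _ _).mp heq |>.2
      rw [h3, h4]

lemma numC4_eq : numC4 o = ∑ a₁ : Fin m, ∑ a₂ : Fin m,
    (if a₁ < a₂ then ((univ : Finset (Fin n × Fin n)).filter fun q =>
      q.1 < q.2 ∧ SpansC4 o a₁ a₂ q.1 q.2).card else 0) := by
  classical
  unfold numC4
  rw [Finset.card_filter, Fintype.sum_prod_type]
  refine Finset.sum_congr rfl fun a₁ _ => ?_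
  rw [Fintype.sum_prod_type]
  refine Finset.sum_congr rfl fun a₂ _ => ?_
  by_cases h : a₁ < a₂
  · rw [if_pos h, Finset.card_filter]
    exact Finset.sum_congr rfl fun q _ => by simp [h]
  · rw [if_neg h]
    simp [h]

end C4Aux

namespace C4Aux
variable {m n : ℕ} (o : Fin m → Fin n → Bool)

lemma xCnt_le₁ (a a₁ a₂ : Fin m) : xCnt o a a₂ ≤ sCnt o a₂ a₁ + xCnt o a a₁ := by
  classical
  unfold xCnt sCnt
  refine le_trans (le_trans (Finset.card_le_card ?_) (Finset.card_union_le _ _)) le_rfl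
  intro b' hb'
  simp only [Finset.mem_filter, Finset.mem_univ, true_and] at hb'
  simp only [Finset.mem_union, Finset.mem_filter, Finset.mem_univ, true_and]
  cases h1 : o a₁ b'
  · exact Or.inl ⟨hb'.2, rfl⟩
  · exact Or.inr ⟨hb'.1, rfl⟩

lemma split_count (u v : Fin m) :
    (univ.filter fun b : Fin n => o u b = true).card
      = (univ.filter fun b : Fin n => o u b = true ∧ o v b = true).card
        + (univ.filter fun b : Fin n => o u b = true ∧ o v b = false).card := by
  classical
  rw [← Finset.card_filter_add_card_filter_not
    (s := univ.filter fun b : Fin n => o u b = true) (p := fun b => o v b = true)]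
  rw [Finset.filter_filter, Finset.filter_filter]
  congr 1
  congr 1
  apply Finset.filter_congr
  intro b _
  simp

lemma xCnt'_eq (hrow : ∀ a' : Fin m, 2 * (univ.filter fun b : Fin n => o a' b = true).card = n)
    (a a' : Fin m) :
    (univ.filter fun b' : Fin n => o a b' = true ∧ o a' b' = false).card = xCnt o a a' := by
  classical
  have h1 := split_count o a a'
  have h2 := split_count o a' a
  have houtc : (univ.filter fun b : Fin n => o a b = true).card
      = (univ.filter fun b : Fin n => o a' b = true).card := by
    have := hrow a; have := hrow a'; omega
  have hcomm : (univ.filter fun b : Fin n => o a b = true ∧ o a' b = true).card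
      = (univ.filter fun b : Fin n => o a' b = true ∧ o a b = true).card := by
    congr 1; apply Finset.filter_congr; intro b _; simp [and_comm]
  have hx : xCnt o a a' = (univ.filter fun b : Fin n => o a' b = true ∧ o a b = false).card := by
    unfold xCnt; congr 1; apply Finset.filter_congr; intro b _; simp [and_comm]
  omega

lemma xCnt_le₂ (hrow : ∀ a' : Fin m, 2 * (univ.filter fun b : Fin n => o a' b = true).card = n)
    (a a₁ a₂ : Fin m) : xCnt o a a₂ ≤ sCnt o a₁ a₂ + xCnt o a a₁ := by
  classical
  rw [← xCnt'_eq o hrow a a₂, ← xCnt'_eq o hrow a a₁]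
  unfold sCnt
  refine le_trans (Finset.card_le_card ?_) (Finset.card_union_le _ _)
  intro b' hb'
  simp only [Finset.mem_filter, Finset.mem_univ, true_and] at hb'
  simp only [Finset.mem_union, Finset.mem_filter, Finset.mem_univ, true_and]
  cases h1 : o a₁ b'
  · exact Or.inr ⟨hb'.1, rfl⟩
  · exact Or.inl ⟨rfl, hb'.2⟩

lemma sq_le_pair (hrow : ∀ a' : Fin m, 2 * (univ.filter fun b : Fin n => o a' b = true).card = n)
    (a a₁ a₂ : Fin m) :
    ((xCnt o a a₁ : ℤ) - xCnt o a a₂)^2 ≤ (sCnt o a₁ a₂ : ℤ) * sCnt o a₂ a₁ := by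
  have h1 := xCnt_le₁ o a a₁ a₂
  have h2 := xCnt_le₁ o a a₂ a₁
  have h3 := xCnt_le₂ o hrow a a₁ a₂
  have h4 := xCnt_le₂ o hrow a a₂ a₁
  zify at h1 h2 h3 h4
  rcases le_total ((xCnt o a a₁ : ℤ)) (xCnt o a a₂) with h | h
  · have e1 : (xCnt o a a₂ : ℤ) - xCnt o a a₁ ≤ sCnt o a₁ a₂ := by linarith
    have e2 : (xCnt o a a₂ : ℤ) - xCnt o a a₁ ≤ sCnt o a₂ a₁ := by linarith
    nlinarith [mul_le_mul e1 e2 (by linarith) (by positivity : (0:ℤ) ≤ (sCnt o a₁ a₂ : ℤ))]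
  · have e1 : (xCnt o a a₁ : ℤ) - xCnt o a a₂ ≤ sCnt o a₁ a₂ := by linarith
    have e2 : (xCnt o a a₁ : ℤ) - xCnt o a a₂ ≤ sCnt o a₂ a₁ := by linarith
    nlinarith [mul_le_mul e1 e2 (by linarith) (by positivity : (0:ℤ) ≤ (sCnt o a₁ a₂ : ℤ))]

end C4Aux

namespace C4Aux
variable {m n : ℕ} (o : Fin m → Fin n → Bool)

lemma sum_sq_lower :
    ∀ (X : Fin m → ℤ), ∑ a₁ : Fin m, ∑ a₂ : Fin m, (X a₁ - X a₂)^2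
      = 2 * (m:ℤ) * (∑ a', X a'^2) - 2 * (∑ a', X a')^2 := by
  intro X
  have inner : ∀ a₁ : Fin m, ∑ a₂ : Fin m, (X a₁ - X a₂)^2
      = (m:ℤ) * X a₁^2 - 2 * X a₁ * (∑ a', X a') + ∑ a', X a'^2 := by
    intro a₁
    calc ∑ a₂ : Fin m, (X a₁ - X a₂)^2
        = ∑ a₂ : Fin m, (X a₁^2 - 2 * X a₁ * X a₂ + X a₂^2) :=
          Finset.sum_congr rfl fun a₂ _ => by ring
      _ = (∑ _a₂ : Fin m, X a₁^2) - (∑ a₂ : Fin m, 2 * X a₁ * X a₂) + ∑ a₂ : Fin m, X a₂^2 := by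
          rw [Finset.sum_add_distrib, Finset.sum_sub_distrib]
      _ = (m:ℤ) * X a₁^2 - 2 * X a₁ * (∑ a', X a') + ∑ a', X a'^2 := by
          rw [Finset.sum_const, Finset.card_univ, Fintype.card_fin, ← Finset.mul_sum]
          simp [nsmul_eq_mul]
  calc ∑ a₁ : Fin m, ∑ a₂ : Fin m, (X a₁ - X a₂)^2
      = ∑ a₁ : Fin m, ((m:ℤ) * X a₁^2 - 2 * X a₁ * (∑ a', X a') + ∑ a', X a'^2) :=
        Finset.sum_congr rfl fun a₁ _ => inner a₁
    _ = (∑ a₁ : Fin m, (m:ℤ) * X a₁^2) - (∑ a₁ : Fin m, 2 * X a₁ * (∑ a', X a'))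
        + ∑ _a₁ : Fin m, ∑ a', X a'^2 := by
        rw [Finset.sum_add_distrib, Finset.sum_sub_distrib]
    _ = 2 * (m:ℤ) * (∑ a', X a'^2) - 2 * (∑ a', X a')^2 := by
        rw [← Finset.mul_sum, Finset.sum_const, Finset.card_univ, Fintype.card_fin]
        have : ∑ a₁ : Fin m, 2 * X a₁ * (∑ a', X a') = 2 * (∑ a', X a')^2 := by
          rw [← Finset.sum_mul]; rw [← Finset.mul_sum]; ring
        rw [this]
        simp [nsmul_eq_mul]
        ring

lemma key_true (ho : IsEulerianBip o) (a : Fin m) (b : Fin n) (hab : o a b = true) :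
    ((8 * dArc o a b : ℤ) - (m : ℤ) * n)^2 ≤ 16 * (numC4 o : ℤ) := by
  classical
  set X : Fin m → ℤ := fun a' => (xCnt o a a' : ℤ) with hX
  -- Step 1 : numC4 dominates the half-sum of products
  have step1 : ∑ a₁ : Fin m, ∑ a₂ : Fin m, (X a₁ - X a₂)^2 ≤ 2 * (numC4 o : ℤ) := by
    have hbound : ∀ a₁ a₂ : Fin m, (X a₁ - X a₂)^2 ≤
        (if a₁ < a₂ then ((sCnt o a₁ a₂ : ℤ) * sCnt o a₂ a₁) else 0)
        + (if a₂ < a₁ then ((sCnt o a₂ a₁ : ℤ) * sCnt o a₁ a₂) else 0) := by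
      intro a₁ a₂
      rcases lt_trichotomy a₁ a₂ with h | h | h
      · rw [if_pos h, if_neg (asymm h), add_zero]
        exact sq_le_pair o ho.1 a a₁ a₂
      · subst h; simp
      · rw [if_neg (asymm h), if_pos h, zero_add]
        have := sq_le_pair o ho.1 a a₂ a₁
        calc (X a₁ - X a₂)^2 = (X a₂ - X a₁)^2 := by ring
          _ ≤ _ := this
    have hsum : ∑ a₁ : Fin m, ∑ a₂ : Fin m, (X a₁ - X a₂)^2
        ≤ (∑ a₁ : Fin m, ∑ a₂ : Fin m, (if a₁ < a₂ then ((sCnt o a₁ a₂ : ℤ) * sCnt o a₂ a₁) else 0))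
          + ∑ a₁ : Fin m, ∑ a₂ : Fin m, (if a₂ < a₁ then ((sCnt o a₂ a₁ : ℤ) * sCnt o a₁ a₂) else 0) := by
      rw [← Finset.sum_add_distrib]
      refine Finset.sum_le_sum fun a₁ _ => ?_
      rw [← Finset.sum_add_distrib]
      exact Finset.sum_le_sum fun a₂ _ => hbound a₁ a₂
    have hswap : ∑ a₁ : Fin m, ∑ a₂ : Fin m, (if a₂ < a₁ then ((sCnt o a₂ a₁ : ℤ) * sCnt o a₁ a₂) else 0)
        = ∑ a₁ : Fin m, ∑ a₂ : Fin m, (if a₁ < a₂ then ((sCnt o a₁ a₂ : ℤ) * sCnt o a₂ a₁) else 0) := by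
      rw [Finset.sum_comm]
    have hnum : ∑ a₁ : Fin m, ∑ a₂ : Fin m, (if a₁ < a₂ then ((sCnt o a₁ a₂ : ℤ) * sCnt o a₂ a₁) else 0)
        ≤ (numC4 o : ℤ) := by
      have := numC4_eq o
      calc ∑ a₁ : Fin m, ∑ a₂ : Fin m, (if a₁ < a₂ then ((sCnt o a₁ a₂ : ℤ) * sCnt o a₂ a₁) else 0)
          ≤ ∑ a₁ : Fin m, ∑ a₂ : Fin m, (if a₁ < a₂ then
              (((univ : Finset (Fin n × Fin n)).filter fun q =>
                q.1 < q.2 ∧ SpansC4 o a₁ a₂ q.1 q.2).card : ℤ) else 0) := by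
            refine Finset.sum_le_sum fun a₁ _ => Finset.sum_le_sum fun a₂ _ => ?_
            by_cases h : a₁ < a₂
            · rw [if_pos h, if_pos h]
              exact_mod_cast pair_lower o a₁ a₂ h
            · rw [if_neg h, if_neg h]
        _ = (numC4 o : ℤ) := by
            rw [this]; push_cast; rfl
    linarith [hsum, hswap, hnum]
  -- Step 2 : variance identity
  have step2 := sum_sq_lower (m := m) X
  -- the two halves of the left side
  set Ap : Finset (Fin m) := univ.filter (fun a' => o a' b = false) with hAp
  set Am : Finset (Fin m) := univ.filter (fun a' => o a' b = true) with hAm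
  have hAmcard : 2 * Am.card = m := ho.2 b
  have hneg : (univ.filter fun a' : Fin m => ¬ (o a' b = true)) = Ap := by
    rw [hAp]; apply Finset.filter_congr; intro x _; simp
  have hcards : Am.card + Ap.card = m := by
    have h := Finset.card_filter_add_card_filter_not
      (s := (univ : Finset (Fin m))) (p := fun a' => o a' b = true)
    rw [hneg, Finset.card_univ, Fintype.card_fin] at h
    exact h
  have hApcard : 2 * Ap.card = m := by omega
  set D : ℤ := ∑ a' ∈ Ap, X a' with hD
  set E : ℤ := ∑ a' ∈ Am, X a' with hE
  set Q : ℤ := ∑ a' : Fin m, X a' ^ 2 with hQ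
  -- splitting the sums
  have hsplitX : E + D = ∑ a' : Fin m, X a' := by
    rw [hD, hE, ← hneg]
    exact Finset.sum_filter_add_sum_filter_not univ _ X
  have hsplitQ : (∑ a' ∈ Am, X a' ^ 2) + (∑ a' ∈ Ap, X a' ^ 2) = Q := by
    rw [hQ, ← hneg]
    exact Finset.sum_filter_add_sum_filter_not univ _ _
  -- Cauchy-Schwarz on each half
  have cs1 : D ^ 2 ≤ (Ap.card : ℤ) * ∑ a' ∈ Ap, X a' ^ 2 :=
    sq_sum_le_card_mul_sum_sq
  have cs2 : E ^ 2 ≤ (Am.card : ℤ) * ∑ a' ∈ Am, X a' ^ 2 :=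
    sq_sum_le_card_mul_sum_sq
  have hm1 : (m : ℤ) = 2 * Ap.card := by exact_mod_cast hApcard.symm
  have hm2 : (m : ℤ) = 2 * Am.card := by exact_mod_cast hAmcard.symm
  have hmQ : 2 * D ^ 2 + 2 * E ^ 2 ≤ (m : ℤ) * Q := by
    calc 2 * D ^ 2 + 2 * E ^ 2
        ≤ 2 * ((Ap.card : ℤ) * ∑ a' ∈ Ap, X a' ^ 2)
          + 2 * ((Am.card : ℤ) * ∑ a' ∈ Am, X a' ^ 2) := by linarith [cs1, cs2]
      _ = (2 * (Ap.card : ℤ)) * (∑ a' ∈ Ap, X a' ^ 2)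
          + (2 * (Am.card : ℤ)) * (∑ a' ∈ Am, X a' ^ 2) := by ring
      _ = (m : ℤ) * (∑ a' ∈ Ap, X a' ^ 2) + (m : ℤ) * (∑ a' ∈ Am, X a' ^ 2) := by
          rw [← hm1, ← hm2]
      _ = (m : ℤ) * ((∑ a' ∈ Am, X a' ^ 2) + ∑ a' ∈ Ap, X a' ^ 2) := by ring
      _ = (m : ℤ) * Q := by rw [hsplitQ]
  -- identification of D with dArc
  have hd' : dArc o a b = ∑ a' ∈ Ap, xCnt o a a' := by
    unfold dArc
    rw [if_pos hab, Finset.card_filter, Fintype.sum_prod_type, hAp, Finset.sum_filter]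
    refine Finset.sum_congr rfl fun a' _ => ?_
    by_cases h : o a' b = false
    · rw [if_pos h]
      unfold xCnt
      rw [Finset.card_filter]
      exact Finset.sum_congr rfl fun b' _ => by simp [h]
    · rw [if_neg h]
      exact Finset.sum_eq_zero fun b' _ => by simp [h]
  have hd : (dArc o a b : ℤ) = D := by
    rw [hd', hD, hX]
    push_cast
    rfl
  -- total sum of xCnt equals mn/4
  have hStot : 4 * (∑ a' : Fin m, xCnt o a a') = m * n := by
    have h1 : ∑ a' : Fin m, xCnt o a a'
        = ∑ b' : Fin n, (if o a b' = false then
            (univ.filter fun a' : Fin m => o a' b' = true).card else 0) := by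
      unfold xCnt
      simp_rw [Finset.card_filter]
      rw [Finset.sum_comm]
      refine Finset.sum_congr rfl fun b' _ => ?_
      by_cases h : o a b' = false
      · rw [if_pos h]
        exact Finset.sum_congr rfl fun a' _ => by simp [h]
      · rw [if_neg h]
        exact Finset.sum_eq_zero fun a' _ => by simp [h]
    have h2 : 2 * (∑ a' : Fin m, xCnt o a a')
        = m * (univ.filter fun b' : Fin n => o a b' = false).card := by
      rw [h1, Finset.mul_sum]
      have : ∀ b' : Fin n, 2 * (if o a b' = false then
          (univ.filter fun a' : Fin m => o a' b' = true).card else 0)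
          = (if o a b' = false then m else 0) := by
        intro b'
        by_cases h : o a b' = false
        · rw [if_pos h, if_pos h, ho.2 b']
        · rw [if_neg h, if_neg h, Nat.mul_zero]
      rw [Finset.sum_congr rfl fun b' _ => this b', ← Finset.sum_filter,
        Finset.sum_const, smul_eq_mul, mul_comm]
    have h3 : 2 * (univ.filter fun b' : Fin n => o a b' = false).card = n := by
      have h4 := Finset.card_filter_add_card_filter_not
        (s := (univ : Finset (Fin n))) (p := fun b' => o a b' = true)
      have h5 : (univ.filter fun b' : Fin n => ¬ (o a b' = true))
          = (univ.filter fun b' : Fin n => o a b' = false) := by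
        apply Finset.filter_congr; intro x _; simp
      rw [h5, Finset.card_univ, Fintype.card_fin] at h4
      have h6 := ho.1 a
      omega
    set cF := (univ.filter fun b' : Fin n => o a b' = false).card
    calc 4 * (∑ a' : Fin m, xCnt o a a') = 2 * (2 * ∑ a' : Fin m, xCnt o a a') := by ring
      _ = 2 * (m * cF) := by rw [h2]
      _ = m * (2 * cF) := by ring
      _ = m * n := by rw [h3]
  -- assemble everything
  have hDE : 4 * (D + E) = (m : ℤ) * n := by
    have : ((∑ a' : Fin m, xCnt o a a' : ℕ) : ℤ) = D + E := by
      rw [add_comm, hsplitX, hX]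
      push_cast
      rfl
    have h7 : (4 : ℤ) * ((∑ a' : Fin m, xCnt o a a' : ℕ) : ℤ) = (m : ℤ) * n := by
      exact_mod_cast congrArg (fun k : ℕ => (k : ℤ)) hStot
    rw [this] at h7
    exact h7
  have hfinal : (D - E) ^ 2 ≤ (numC4 o : ℤ) := by
    have hS2 : ∑ a₁ : Fin m, ∑ a₂ : Fin m, (X a₁ - X a₂) ^ 2
        = 2 * (m : ℤ) * Q - 2 * (E + D) ^ 2 := by rw [step2, hsplitX]
    nlinarith [step1, hmQ, hS2]
  have harc : 8 * (dArc o a b : ℤ) - (m : ℤ) * n = 4 * (D - E) := by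
    rw [hd]
    linarith [hDE]
  rw [harc]
  calc (4 * (D - E)) ^ 2 = 16 * (D - E) ^ 2 := by ring
    _ ≤ 16 * (numC4 o : ℤ) := by linarith [hfinal]

end C4Aux

namespace C4Aux
variable {m n : ℕ} (o : Fin m → Fin n → Bool)

lemma compl_card {k : ℕ} (f : Fin k → Bool) (h : 2 * (univ.filter fun i => f i = true).card = k) :
    2 * (univ.filter fun i => f i = false).card = k := by
  classical
  have h4 := Finset.card_filter_add_card_filter_not
    (s := (univ : Finset (Fin k))) (p := fun i => f i = true)
  have h5 : (univ.filter fun i : Fin k => ¬ (f i = true))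
      = (univ.filter fun i : Fin k => f i = false) := by
    apply Finset.filter_congr; intro x _; simp
  rw [h5, Finset.card_univ, Fintype.card_fin] at h4
  omega

lemma eulerian_not (ho : IsEulerianBip o) : IsEulerianBip (fun a b => !o a b) := by
  constructor
  · intro a
    have h1 : (univ.filter fun b : Fin n => (!o a b) = true)
        = (univ.filter fun b : Fin n => o a b = false) := by
      apply Finset.filter_congr; intro x _; simp
    rw [h1]
    exact compl_card (fun b => o a b) (ho.1 a)
  · intro b
    have h1 : (univ.filter fun a : Fin m => (!o a b) = true)
        = (univ.filter fun a : Fin m => o a b = false) := by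
      apply Finset.filter_congr; intro x _; simp
    rw [h1]
    exact compl_card (fun a => o a b) (ho.2 b)

lemma numC4_not : numC4 (fun a b => !o a b) = numC4 o := by
  unfold numC4
  congr 1
  apply Finset.filter_congr
  intro q _
  simp only [SpansC4, Bool.not_eq_true', Bool.not_eq_false']
  tauto

lemma dArc_not (a : Fin m) (b : Fin n) (hab : o a b = false) :
    dArc (fun a b => !o a b) a b = dArc o a b := by
  unfold dArc
  rw [if_pos (by simp [hab] : (!o a b) = true), if_neg (by simp [hab])]
  congr 1
  apply Finset.filter_congr
  intro p _
  simp

lemma key (ho : IsEulerianBip o) (a : Fin m) (b : Fin n) :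
    ((8 * dArc o a b : ℤ) - (m : ℤ) * n)^2 ≤ 16 * (numC4 o : ℤ) := by
  by_cases hab : o a b = true
  · exact key_true o ho a b hab
  · have hab' : o a b = false := by simpa using hab
    have h := key_true (fun a b => !o a b) (eulerian_not o ho) a b (by simp [hab'])
    rw [numC4_not, dArc_not o a b hab'] at h
    exact h

end C4Aux



/-- Let `G` be an Eulerian orientation of `K_{m,n}` (`m`, `n` even) and let
`α(G) = min_e α(e)` over all arcs `e` of `G`.  Then `G` contains at least
`m²n²·(1/16 − α(G) + 4·α(G)²)` copies of the directed 4-cycle. -/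
theorem count_C4_alpha_eulerian_bipartite (m n : ℕ) (hm : Even m) (hn : Even n)
    (o : Fin m → Fin n → Bool) (ho : IsEulerianBip o) (αG : ℝ)
    (hαG : IsLeast {r : ℝ | ∃ (a : Fin m) (b : Fin n), r = alphaArc o a b} αG) :
    (m : ℝ) ^ 2 * (n : ℝ) ^ 2 * (1 / 16 - αG + 4 * αG ^ 2) ≤ (numC4 o : ℝ) := by
  obtain ⟨⟨a, b, hab⟩, -⟩ := hαG
  have hm0 : 0 < m := a.pos
  have hn0 : 0 < n := b.pos
  have hc : (0 : ℝ) < (m : ℝ) * n := by positivity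
  set d : ℝ := (dArc o a b : ℝ) with hd
  have hkey := C4Aux.key o ho a b
  have hkeyR : (8 * d - (m : ℝ) * n) ^ 2 ≤ 16 * (numC4 o : ℝ) := by
    have h2 := (Int.cast_le (R := ℝ)).mpr hkey
    push_cast at h2
    convert h2 using 2 <;> push_cast <;> ring
  have hne : (m : ℝ) * n ≠ 0 := ne_of_gt hc
  have hident : (m : ℝ) ^ 2 * (n : ℝ) ^ 2 * (1 / 16 - αG + 4 * αG ^ 2)
      = (8 * d - (m : ℝ) * n) ^ 2 / 16 := by
    rw [hab]
    unfold alphaArc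
    rcases min_choice ((dArc o a b : ℝ) / ((m : ℝ) * n))
      (1 / 4 - (dArc o a b : ℝ) / ((m : ℝ) * n)) with h | h
    · rw [h, ← hd]
      field_simp
      ring
    · rw [h, ← hd]
      field_simp
      ring
  rw [hident]
  linarith [hkeyR]
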